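/- Let φ^{12}_{jk}, φ^{23}_{kl}, φ^{13}_{jl} (j,k,l ∈ {0,1}) be real numbers and set φ_{jkl} = φ^{12}_{jk} + φ^{23}_{kl} + φ^{13}_{jl}. Define η(t) = (1/8)·Σ_{k,l ∈ {0,1}} exp(i·(φ_{0kl} − φ_{1kl})·t). Then |η(t)| = (1/2)·|cos(Φ12·t/2)|·|cos(Φ13·t/2)|, where Φ12 = φ^{12}_{01} + φ^{12}_{10} − φ^{12}_{00} − φ^{12}_{11} and Φ13 = φ^{13}_{01} + φ^{13}_{10} − φ^{13}_{00} − φ^{13}_{11}. -/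

import Mathlib

open Real

lemma abs_exp_add_exp (α β : ℝ) :
    ‖Complex.exp (Complex.I * α) + Complex.exp (Complex.I * β)‖ =
      2 * |Real.cos ((α - β) / 2)| := by
  have h : Complex.exp (Complex.I * α) + Complex.exp (Complex.I * β) =
      Complex.exp (Complex.I * (((α + β) / 2 : ℝ))) *
        (2 * Complex.cos (((α - β) / 2 : ℝ))) := by
    have h1 : (Complex.I * α) = Complex.I * (((α+β)/2 : ℝ)) + (((α-β)/2 : ℝ)) * Complex.I := by
      push_cast; ring
    have h2 : (Complex.I * β) = Complex.I * (((α+β)/2 : ℝ)) + (-(((α-β)/2 : ℝ))) * Complex.I := by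
      push_cast; ring
    rw [Complex.cos, h1, h2, Complex.exp_add, Complex.exp_add]
    push_cast; ring
  rw [h, norm_mul, Complex.norm_exp, norm_mul, ← Complex.ofReal_cos, Complex.norm_real]
  simp [Complex.mul_re]

/-- In the three-body QGEM system with total phases
`φ_{jkl} = φ12_{jk} + φ23_{kl} + φ13_{jl}`, the quantity
`η(t) = (1/8)·Σ_{k,l} exp(i(φ_{0kl} − φ_{1kl})t)` satisfies
`|η(t)| = (1/2)·|cos(Φ12·t/2)|·|cos(Φ13·t/2)|` where `Φ12`, `Φ13` are the
signed entangling phases of pairs (1,2) and (1,3). -/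
theorem three_body_eta_factorization
    (φ12 φ23 φ13 : Fin 2 → Fin 2 → ℝ) (t : ℝ)
    (φ : Fin 2 → Fin 2 → Fin 2 → ℝ)
    (hφ : ∀ j k l, φ j k l = φ12 j k + φ23 k l + φ13 j l)
    (η : ℂ)
    (hη : η = (1 / 8 : ℂ) * ∑ k : Fin 2, ∑ l : Fin 2,
      Complex.exp (Complex.I * Complex.ofReal ((φ 0 k l - φ 1 k l) * t))) :
    ‖η‖ =
      (1 / 2) * |Real.cos ((φ12 0 1 + φ12 1 0 - φ12 0 0 - φ12 1 1) * t / 2)| *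
        |Real.cos ((φ13 0 1 + φ13 1 0 - φ13 0 0 - φ13 1 1) * t / 2)| := by
  have E : ∀ x y : ℝ, Complex.exp (Complex.I * ((x + y : ℝ) : ℂ)) =
      Complex.exp (Complex.I * x) * Complex.exp (Complex.I * y) := fun x y => by
    rw [← Complex.exp_add]; push_cast; ring_nf
  set a0 := (φ12 0 0 - φ12 1 0) * t with ha0
  set a1 := (φ12 0 1 - φ12 1 1) * t with ha1
  set b0 := (φ13 0 0 - φ13 1 0) * t with hb0
  set b1 := (φ13 0 1 - φ13 1 1) * t with hb1
  have key : η = (1 / 8 : ℂ) *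
      ((Complex.exp (Complex.I * a0) + Complex.exp (Complex.I * a1)) *
       (Complex.exp (Complex.I * b0) + Complex.exp (Complex.I * b1))) := by
    rw [hη]
    simp only [Fin.sum_univ_two, hφ]
    have r00 : ((φ12 0 0 + φ23 0 0 + φ13 0 0) - (φ12 1 0 + φ23 0 0 + φ13 1 0)) * t
        = a0 + b0 := by rw [ha0, hb0]; ring
    have r01 : ((φ12 0 0 + φ23 0 1 + φ13 0 1) - (φ12 1 0 + φ23 0 1 + φ13 1 1)) * t
        = a0 + b1 := by rw [ha0, hb1]; ring
    have r10 : ((φ12 0 1 + φ23 1 0 + φ13 0 0) - (φ12 1 1 + φ23 1 0 + φ13 1 0)) * t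
        = a1 + b0 := by rw [ha1, hb0]; ring
    have r11 : ((φ12 0 1 + φ23 1 1 + φ13 0 1) - (φ12 1 1 + φ23 1 1 + φ13 1 1)) * t
        = a1 + b1 := by rw [ha1, hb1]; ring
    rw [r00, r01, r10, r11, E, E, E, E]; ring
  rw [key, norm_mul, norm_mul, abs_exp_add_exp, abs_exp_add_exp]
  have c12 : (a0 - a1) / 2 = -((φ12 0 1 + φ12 1 0 - φ12 0 0 - φ12 1 1) * t / 2) := by
    rw [ha0, ha1]; ring
  have c13 : (b0 - b1) / 2 = -((φ13 0 1 + φ13 1 0 - φ13 0 0 - φ13 1 1) * t / 2) := by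
    rw [hb0, hb1]; ring
  rw [c12, c13, Real.cos_neg, Real.cos_neg]
  simp [map_div₀]
  ring
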